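/- For every v ∈ ℝ^{nd} and for both choices of sign, vᵀ (I ± S̃) v = (1/2) Σ_{i=1}^n Σ_{j=1}^n w i j · ‖ v(i)/√(deg(i)) ± (O i j) v(j)/√(deg(j)) ‖², where ‖·‖ is the Euclidean norm on ℝ^d; in particular both quadratic forms are nonnegative. -/

import Mathlib

open Matrix BigOperators

lemma vdm_key (n d : ℕ)
    (w : Fin n → Fin n → ℝ)
    (hw_symm : ∀ i j, w i j = w j i)
    (O : Fin n → Fin n → Matrix (Fin d) (Fin d) ℝ)
    (hO_orth : ∀ i j, (O i j)ᵀ * O i j = 1)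
    (deg : Fin n → ℝ) (hdeg_def : ∀ i, deg i = ∑ j, w i j)
    (hdeg_pos : ∀ i, 0 < deg i)
    (Stil : Matrix (Fin n × Fin d) (Fin n × Fin d) ℝ)
    (hStil : ∀ p q, Stil p q =
      (w p.1 q.1 / Real.sqrt (deg p.1 * deg q.1)) * O p.1 q.1 p.2 q.2)
    (v : Fin n × Fin d → ℝ) (ε : ℝ) (hε : ε ^ 2 = 1) :
    dotProduct v v + ε * dotProduct v (Stil.mulVec v) =
      (1 / 2) * ∑ i, ∑ j, w i j *
        ∑ a, (v (i, a) / Real.sqrt (deg i)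
          + ε * ((O i j).mulVec (fun b => v (j, b)) a / Real.sqrt (deg j))) ^ 2 := by
  have hd_ne : ∀ i, deg i ≠ 0 := fun i => (hdeg_pos i).ne'
  have hsq : ∀ i, Real.sqrt (deg i) ^ 2 = deg i := fun i => Real.sq_sqrt (hdeg_pos i).le
  have hsqrt : ∀ i j, Real.sqrt (deg i * deg j) = Real.sqrt (deg i) * Real.sqrt (deg j) :=
    fun i j => Real.sqrt_mul (hdeg_pos i).le _
  set C : Fin n → Fin n → ℝ := fun i j => ∑ a, v (i, a) * (O i j).mulVec (fun b => v (j, b)) a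
    with hC
  set A : Fin n → ℝ := fun i => ∑ a, v (i, a) ^ 2 with hA
  have claimA : ∀ i j, ∑ a, ((O i j).mulVec (fun b => v (j, b)) a) ^ 2 = A j := by
    intro i j
    have : ((O i j).mulVec (fun b => v (j, b))) ⬝ᵥ ((O i j).mulVec (fun b => v (j, b)))
        = (fun b => v (j, b)) ⬝ᵥ (fun b => v (j, b)) := by
      rw [Matrix.dotProduct_mulVec, ← Matrix.mulVec_transpose, Matrix.mulVec_mulVec,
        hO_orth i j, Matrix.one_mulVec]
    simpa [dotProduct, sq, hA] using this
  have hT : dotProduct v (Stil.mulVec v) =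
      ∑ i, ∑ j, (w i j / (Real.sqrt (deg i) * Real.sqrt (deg j))) * C i j := by
    simp only [dotProduct, Matrix.mulVec, dotProduct, hStil, hsqrt]
    simp only [Fintype.sum_prod_type]
    refine Finset.sum_congr rfl fun i _ => ?_
    simp only [Finset.mul_sum, hC]
    rw [Finset.sum_comm]
    refine Finset.sum_congr rfl fun j _ => Finset.sum_congr rfl fun a _ => ?_
    simp only [Matrix.mulVec, dotProduct, Finset.mul_sum]
    exact Finset.sum_congr rfl fun b _ => by ring
  have hN : dotProduct v v = ∑ i, A i := by
    simp [dotProduct, hA, Fintype.sum_prod_type, sq]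
  have key : ∀ x y s t : ℝ, (x / s + ε * (y / t)) ^ 2
      = x ^ 2 / s ^ 2 + ε ^ 2 * (y ^ 2 / t ^ 2) + 2 * ε * (x * y / (s * t)) := by
    intros; ring
  have inner : ∀ i j, w i j *
      ∑ a, (v (i, a) / Real.sqrt (deg i)
        + ε * ((O i j).mulVec (fun b => v (j, b)) a / Real.sqrt (deg j))) ^ 2
      = w i j / deg i * A i + w i j / deg j * A j
        + 2 * ε * ((w i j / (Real.sqrt (deg i) * Real.sqrt (deg j))) * C i j) := by
    intro i j
    have e1 : ∑ a, (v (i, a) / Real.sqrt (deg i)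
        + ε * ((O i j).mulVec (fun b => v (j, b)) a / Real.sqrt (deg j))) ^ 2
        = ∑ a, (v (i, a) ^ 2 / deg i
          + ((O i j).mulVec (fun b => v (j, b)) a) ^ 2 / deg j
          + 2 * ε * ((v (i, a) * (O i j).mulVec (fun b => v (j, b)) a)
              / (Real.sqrt (deg i) * Real.sqrt (deg j)))) := by
      refine Finset.sum_congr rfl fun a _ => ?_
      rw [key, hε, one_mul, hsq i, hsq j]
    rw [e1, Finset.sum_add_distrib, Finset.sum_add_distrib, ← Finset.sum_div, ← Finset.sum_div,
      claimA i j, ← Finset.mul_sum, ← Finset.sum_div]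
    have h1 : (∑ a : Fin d, v (i, a) ^ 2) = A i := rfl
    have h2 : (∑ a : Fin d, v (i, a) * (O i j).mulVec (fun b => v (j, b)) a) = C i j := rfl
    rw [h1, h2]
    ring
  have L1 : ∑ i, ∑ j, w i j / deg i * A i = ∑ i, A i := by
    refine Finset.sum_congr rfl fun i _ => ?_
    rw [← Finset.sum_mul, ← Finset.sum_div, ← hdeg_def i, div_self (hd_ne i), one_mul]
  have L2 : ∑ i, ∑ j, w i j / deg j * A j = ∑ i, A i := by
    rw [Finset.sum_comm]
    refine Finset.sum_congr rfl fun j _ => ?_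
    have hs : ∀ i, w i j = w j i := fun i => hw_symm i j
    simp_rw [hs]
    rw [← Finset.sum_mul, ← Finset.sum_div, ← hdeg_def j, div_self (hd_ne j), one_mul]
  calc dotProduct v v + ε * dotProduct v (Stil.mulVec v)
      = (1/2) * (∑ i, ∑ j, w i j / deg i * A i + ∑ i, ∑ j, w i j / deg j * A j
          + 2 * ε * ∑ i, ∑ j, (w i j / (Real.sqrt (deg i) * Real.sqrt (deg j))) * C i j) := by
        rw [hN, hT, L1, L2]; ring
    _ = (1/2) * ∑ i, ∑ j, (w i j / deg i * A i + w i j / deg j * A j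
          + 2 * ε * ((w i j / (Real.sqrt (deg i) * Real.sqrt (deg j))) * C i j)) := by
        simp only [Finset.sum_add_distrib, Finset.mul_sum]
    _ = _ := by
        congr 1
        exact Finset.sum_congr rfl fun i _ => Finset.sum_congr rfl fun j _ => (inner i j).symm

/-- For every `v ∈ ℝ^{nd}` and both choices of sign,
`vᵀ (I ± S̃) v = (1/2) Σᵢ Σⱼ w i j · ‖ v(i)/√deg(i) ± (O i j) v(j)/√deg(j) ‖²`,
and in particular both quadratic forms are nonnegative. -/
theorem vdm_quadratic_form_identity
    (n d : ℕ) (hn : 1 ≤ n) (hd : 1 ≤ d)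
    (w : Fin n → Fin n → ℝ)
    (hw_symm : ∀ i j, w i j = w j i)
    (hw_nonneg : ∀ i j, 0 ≤ w i j)
    (hw_diag : ∀ i, w i i = 0)
    (O : Fin n → Fin n → Matrix (Fin d) (Fin d) ℝ)
    (hO_orth : ∀ i j, (O i j)ᵀ * O i j = 1 ∧ O i j * (O i j)ᵀ = 1)
    (hO_symm : ∀ i j, (O i j)ᵀ = O j i)
    (deg : Fin n → ℝ) (hdeg_def : ∀ i, deg i = ∑ j, w i j)
    (hdeg_pos : ∀ i, 0 < deg i)
    (Stil : Matrix (Fin n × Fin d) (Fin n × Fin d) ℝ)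
    (hStil : ∀ p q, Stil p q =
      (w p.1 q.1 / Real.sqrt (deg p.1 * deg q.1)) * O p.1 q.1 p.2 q.2) :
    ∀ v : Fin n × Fin d → ℝ,
      (dotProduct v ((1 + Stil).mulVec v) =
        (1 / 2) * ∑ i, ∑ j, w i j *
          ∑ a, (v (i, a) / Real.sqrt (deg i)
            + (O i j).mulVec (fun b => v (j, b)) a / Real.sqrt (deg j)) ^ 2) ∧
      (dotProduct v ((1 - Stil).mulVec v) =
        (1 / 2) * ∑ i, ∑ j, w i j *
          ∑ a, (v (i, a) / Real.sqrt (deg i)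
            - (O i j).mulVec (fun b => v (j, b)) a / Real.sqrt (deg j)) ^ 2) ∧
      0 ≤ dotProduct v ((1 + Stil).mulVec v) ∧
      0 ≤ dotProduct v ((1 - Stil).mulVec v) := by
  intro v
  have hplus := vdm_key n d w hw_symm O (fun i j => (hO_orth i j).1) deg hdeg_def hdeg_pos
    Stil hStil v 1 (by norm_num)
  have hminus := vdm_key n d w hw_symm O (fun i j => (hO_orth i j).1) deg hdeg_def hdeg_pos
    Stil hStil v (-1) (by norm_num)
  simp only [one_mul] at hplus
  simp only [neg_one_mul, neg_mul, ← sub_eq_add_neg, one_mul] at hminus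
  have e1 : dotProduct v ((1 + Stil).mulVec v)
      = dotProduct v v + dotProduct v (Stil.mulVec v) := by
    rw [Matrix.add_mulVec, Matrix.one_mulVec, dotProduct_add]
  have e2 : dotProduct v ((1 - Stil).mulVec v)
      = dotProduct v v - dotProduct v (Stil.mulVec v) := by
    rw [Matrix.sub_mulVec, Matrix.one_mulVec, dotProduct_sub]
  have P : dotProduct v ((1 + Stil).mulVec v) =
      (1 / 2) * ∑ i, ∑ j, w i j *
        ∑ a, (v (i, a) / Real.sqrt (deg i)
          + (O i j).mulVec (fun b => v (j, b)) a / Real.sqrt (deg j)) ^ 2 := by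
    rw [e1, hplus]
  have M : dotProduct v ((1 - Stil).mulVec v) =
      (1 / 2) * ∑ i, ∑ j, w i j *
        ∑ a, (v (i, a) / Real.sqrt (deg i)
          - (O i j).mulVec (fun b => v (j, b)) a / Real.sqrt (deg j)) ^ 2 := by
    rw [e2, hminus]
  refine ⟨P, M, ?_, ?_⟩
  · rw [P]
    refine mul_nonneg (by norm_num) (Finset.sum_nonneg fun i _ => Finset.sum_nonneg fun j _ =>
      mul_nonneg (hw_nonneg i j) (Finset.sum_nonneg fun a _ => sq_nonneg _))
  · rw [M]
    refine mul_nonneg (by norm_num) (Finset.sum_nonneg fun i _ => Finset.sum_nonneg fun j _ =>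
      mul_nonneg (hw_nonneg i j) (Finset.sum_nonneg fun a _ => sq_nonneg _))
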